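/- Corollary of the symmetric power degree bound: with A, W, ρ̂ as above, let f ∈ Sym^d(W) and let M ⊆ Sym^d(W) be the cyclic U(A)-submodule generated by f. Then M is spanned by the elements ρ̂(μ)(f) for μ ∈ U(A) with deg μ ≤ d. -/

import Mathlib

/-!
STATEMENT 15 (Corollary of the symmetric power degree bound): with `A`, `W`, `ρ̂` as
in Statement 14, if `f ∈ Sym^d(W)` and `M ⊆ Sym^d(W)` is the cyclic `U(A)`-module
generated by `f`, then `M` is spanned by the elements `ρ̂(μ)(f)` with `deg μ ≤ d`.
Here `W = ι →₀ ℂ`, `Sym(W) = ℂ[ι]`, and the action of monomials of `U(A)` is given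
by compositions of the derivations extending `ρ(a)`.
-/

noncomputable section

open MvPolynomial

section Lists
variable {A : Type} {M : Type*} [AddCommMonoid M]

/-- All lists obtained from `l` by applying `φ` to exactly one entry. -/
def oneHoles (φ : A → A) : List A → List (List A)
  | [] => []
  | b :: l => (φ b :: l) :: (oneHoles φ l).map (b :: ·)

/-- All pairs (entry, rest) obtained by removing one entry of `l`. -/
def holes : List A → List (A × List A)
  | [] => []
  | b :: l => (b, l) :: (holes l).map (fun p => (p.1, b :: p.2))

@[simp] lemma oneHoles_nil (φ : A → A) : oneHoles φ [] = [] := rfl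
@[simp] lemma oneHoles_cons (φ : A → A) (b : A) (l : List A) :
    oneHoles φ (b :: l) = (φ b :: l) :: (oneHoles φ l).map (b :: ·) := rfl
@[simp] lemma holes_nil : holes ([] : List A) = [] := rfl
@[simp] lemma holes_cons (b : A) (l : List A) :
    holes (b :: l) = (b, l) :: (holes l).map (fun p => (p.1, b :: p.2)) := rfl

lemma length_of_mem_oneHoles {φ : A → A} : ∀ {l m : List A}, m ∈ oneHoles φ l → m.length = l.length
  | b :: l, m, h => by
    rcases List.mem_cons.mp h with h | h
    · subst h; simp
    · obtain ⟨m', hm', rfl⟩ := List.mem_map.mp h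
      simp [length_of_mem_oneHoles hm']

lemma length_of_mem_holes : ∀ {l : List A} {p : A × List A}, p ∈ holes l → p.2.length + 1 = l.length
  | b :: l, p, h => by
    rcases List.mem_cons.mp h with h | h
    · subst h; simp
    · obtain ⟨p', hp', rfl⟩ := List.mem_map.mp h
      simp [length_of_mem_holes hp']

lemma sum_map_add (l : List A) (f g : A → M) :
    (l.map (fun x => f x + g x)).sum = (l.map f).sum + (l.map g).sum := by
  induction l with
  | nil => simp
  | cons b t ih => simp [ih]; abel

/-- The key combinatorial exchange lemma. -/
lemma holes_oneHoles_exchange (φ : A → A) (F : A → List A → M) :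
    ∀ l : List A,
      ((oneHoles φ l).map (fun m => ((holes m).map (fun p => F p.1 p.2)).sum)).sum
        = ((holes l).map (fun p => F (φ p.1) p.2
            + ((oneHoles φ p.2).map (fun r => F p.1 r)).sum)).sum := by
  intro l
  induction l generalizing F with
  | nil => simp
  | cons b t ih =>
    simp only [oneHoles_cons, holes_cons, List.map_cons, List.sum_cons, List.map_map,
      Function.comp_def]
    have ih' := ih (fun c r => F c (b :: r))
    rw [sum_map_add (oneHoles φ t) (fun x => F b x)
      (fun x => ((holes x).map (fun p => F p.1 (b :: p.2))).sum), ih',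
      sum_map_add, sum_map_add, sum_map_add]
    abel

end Lists

variable (A : Type) [Ring A] [Algebra ℂ A] (ι : Type)
  (ρ : A →ₐ[ℂ] Module.End ℂ (ι →₀ ℂ))

/-- The embedding `W = ι →₀ ℂ → ℂ[ι]`. -/
def emb : (ι →₀ ℂ) →ₗ[ℂ] MvPolynomial ι ℂ :=
  Finsupp.linearCombination ℂ MvPolynomial.X

/-- The derivation `ρ̂(a)` of `Sym(W) = ℂ[ι]` extending `ρ(a)`. -/
def Der (a : A) : Derivation ℂ (MvPolynomial ι ℂ) (MvPolynomial ι ℂ) :=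
  MvPolynomial.mkDerivation ℂ (fun i => emb ι (ρ a (Finsupp.single i 1)))

/-- The operator `ρ̂(a₁ ⋯ a_s)` for a list `l = [a₁,...,a_s]`. -/
def compDer (l : List A) : Module.End ℂ (MvPolynomial ι ℂ) :=
  (l.map (fun a => ((Der A ι ρ a).toLinearMap : Module.End ℂ (MvPolynomial ι ℂ)))).prod

lemma Der_emb (a : A) (w : ι →₀ ℂ) : Der A ι ρ a (emb ι w) = emb ι (ρ a w) := by
  induction w using Finsupp.induction_linear with
  | zero => simp
  | add u v hu hv => simp [map_add, hu, hv]
  | single i c =>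
    have h1 : emb ι (Finsupp.single i c) = c • (X i : MvPolynomial ι ℂ) := by
      simp [emb, Finsupp.linearCombination_single]
    have h2 : Finsupp.single i c = c • Finsupp.single i (1 : ℂ) := by
      simp [Finsupp.smul_single]
    rw [h1, h2, Derivation.map_smul, map_smul, map_smul]
    simp [Der, MvPolynomial.mkDerivation_X]

/-- The injective-placement (polarization) operators. -/
def P : List A → Module.End ℂ (MvPolynomial ι ℂ)
  | [] => 1
  | a :: l => (Der A ι ρ a).toLinearMap ∘ₗ P l
      - ((oneHoles (fun x => a * x) l).attach.map (fun m => P m.1)).sum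
termination_by l => l.length
decreasing_by
  · simp
  · have := length_of_mem_oneHoles m.2
    simp [this]

lemma list_sum_apply {R M N : Type*} [Semiring R] [AddCommMonoid M] [AddCommMonoid N]
    [Module R M] [Module R N] (l : List (M →ₗ[R] N)) (x : M) :
    l.sum x = (l.map (fun T => T x)).sum := by
  induction l with
  | nil => rfl
  | cons T t ih => simp [List.sum_cons, LinearMap.add_apply, ih]

@[simp] lemma P_nil : P A ι ρ [] = 1 := by rw [P]

lemma P_cons (a : A) (l : List A) :
    P A ι ρ (a :: l) = (Der A ι ρ a).toLinearMap ∘ₗ P A ι ρ l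
      - ((oneHoles (fun x => a * x) l).map (P A ι ρ)).sum := by
  rw [P]
  congr 1
  rw [List.attach_map_val]

lemma P_cons_apply (a : A) (l : List A) (f : MvPolynomial ι ℂ) :
    P A ι ρ (a :: l) f = Der A ι ρ a (P A ι ρ l f)
      - ((oneHoles (fun x => a * x) l).map (fun m => P A ι ρ m f)).sum := by
  rw [P_cons]
  simp [LinearMap.sub_apply, list_sum_apply, List.map_map, Function.comp_def]

lemma mul_list_sum' {R α : Type*} [NonUnitalNonAssocSemiring R] (c : R) (l : List α) (f : α → R) :
    c * (l.map f).sum = (l.map fun x => c * f x).sum := by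
  induction l with
  | nil => simp
  | cons b t ih => simp [mul_add, ih]

lemma sum_map_sub {α M : Type*} [AddCommGroup M] (l : List α) (f g : α → M) :
    (l.map (fun x => f x - g x)).sum = (l.map f).sum - (l.map g).sum := by
  induction l with
  | nil => simp
  | cons b t ih => simp [ih]; abel

lemma Der_mul_emb (a : A) (w : ι →₀ ℂ) (g : MvPolynomial ι ℂ) :
    Der A ι ρ a (emb ι w * g) = emb ι w * Der A ι ρ a g + emb ι (ρ a w) * g := by
  rw [Derivation.leibniz, Der_emb, smul_eq_mul, smul_eq_mul, mul_comm g]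

lemma P_mul (w : ι →₀ ℂ) (g : MvPolynomial ι ℂ) :
    ∀ m : List A, P A ι ρ m (emb ι w * g) = emb ι w * P A ι ρ m g
      + ((holes m).map (fun p => emb ι (ρ p.1 w) * P A ι ρ p.2 g)).sum := by
  suffices H : ∀ n (m : List A), m.length = n →
      P A ι ρ m (emb ι w * g) = emb ι w * P A ι ρ m g
        + ((holes m).map (fun p => emb ι (ρ p.1 w) * P A ι ρ p.2 g)).sum from
    fun m => H m.length m rfl
  intro n
  induction n using Nat.strong_induction_on with
  | _ n ih =>
    intro m hm
    match m with
    | [] => simp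
    | a :: l =>
      subst hm
      have ihl := ih l.length (by simp) l rfl
      have ihOH : ∀ m' ∈ oneHoles (fun x => a*x) l,
          P A ι ρ m' (emb ι w * g) = emb ι w * P A ι ρ m' g
            + ((holes m').map (fun p => emb ι (ρ p.1 w) * P A ι ρ p.2 g)).sum :=
        fun m' hm' => ih m'.length (by rw [length_of_mem_oneHoles hm']; simp) m' rfl
      have hρ : ∀ c : A, emb ι (ρ a (ρ c w)) = emb ι (ρ (a*c) w) := by
        intro c; rw [map_mul, Module.End.mul_apply]
      have hex := holes_oneHoles_exchange (fun x => a*x)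
        (fun c r => emb ι (ρ c w) * P A ι ρ r g) l
      rw [P_cons_apply, P_cons_apply, ihl, List.map_congr_left ihOH]
      rw [map_add, Der_mul_emb]
      rw [map_list_sum ((Der A ι ρ a) : Derivation ℂ (MvPolynomial ι ℂ) (MvPolynomial ι ℂ))]
      rw [List.map_map]
      rw [show ((holes l).map ((Der A ι ρ a) ∘ fun p => emb ι (ρ p.1 w) * P A ι ρ p.2 g))
            = (holes l).map (fun p => emb ι (ρ p.1 w) * Der A ι ρ a (P A ι ρ p.2 g)
                + emb ι (ρ (a*p.1) w) * P A ι ρ p.2 g) from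
        List.map_congr_left (fun p _ => by
          simp only [Function.comp_apply, Der_mul_emb, hρ])]
      rw [sum_map_add (oneHoles (fun x => a*x) l)
        (fun m' => emb ι w * P A ι ρ m' g)
        (fun m' => ((holes m').map (fun p => emb ι (ρ p.1 w) * P A ι ρ p.2 g)).sum)]
      rw [← mul_list_sum' (emb ι w) (oneHoles (fun x => a*x) l) (P A ι ρ · g)]
      rw [hex]
      rw [sum_map_add (holes l)
        (fun p => emb ι (ρ (a*p.1) w) * P A ι ρ p.2 g)
        (fun p => ((oneHoles (fun x => a*x) p.2).map
          (fun r => emb ι (ρ p.1 w) * P A ι ρ r g)).sum)]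
      rw [sum_map_add (holes l)
        (fun p => emb ι (ρ p.1 w) * Der A ι ρ a (P A ι ρ p.2 g))
        (fun p => emb ι (ρ (a*p.1) w) * P A ι ρ p.2 g)]
      -- now expand the RHS
      simp only [holes_cons, List.map_cons, List.sum_cons, List.map_map, Function.comp_def]
      rw [show ((holes l).map (fun p => emb ι (ρ p.1 w) * P A ι ρ (a :: p.2) g))
            = (holes l).map (fun p => emb ι (ρ p.1 w) * Der A ι ρ a (P A ι ρ p.2 g)
                - ((oneHoles (fun x => a*x) p.2).map
                    (fun r => emb ι (ρ p.1 w) * P A ι ρ r g)).sum) from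
        List.map_congr_left (fun p _ => by
          rw [P_cons_apply, mul_sub, mul_list_sum'])]
      rw [sum_map_sub (holes l)
        (fun p => emb ι (ρ p.1 w) * Der A ι ρ a (P A ι ρ p.2 g))
        (fun p => ((oneHoles (fun x => a*x) p.2).map
          (fun r => emb ι (ρ p.1 w) * P A ι ρ r g)).sum)]
      rw [mul_sub]
      abel

lemma P_one : ∀ m : List A, m ≠ [] → P A ι ρ m (1 : MvPolynomial ι ℂ) = 0 := by
  suffices H : ∀ n (m : List A), m.length = n → m ≠ [] →
      P A ι ρ m (1 : MvPolynomial ι ℂ) = 0 from fun m => H m.length m rfl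
  intro n
  induction n using Nat.strong_induction_on with
  | _ n ih =>
    intro m hm hne
    match m with
    | [] => exact absurd rfl hne
    | a :: l =>
      subst hm
      rw [P_cons_apply]
      match l with
      | [] => simp
      | b :: t =>
        rw [ih (b :: t).length (by simp) (b :: t) rfl (by simp)]
        rw [show ((oneHoles (fun x => a*x) (b :: t)).map
              (fun m' => P A ι ρ m' (1 : MvPolynomial ι ℂ)))
            = (oneHoles (fun x => a*x) (b :: t)).map (fun _ => (0 : MvPolynomial ι ℂ)) from
          List.map_congr_left (fun m' hm' => by
            have hlen := length_of_mem_oneHoles hm'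
            exact ih m'.length (by rw [hlen]; simp) m' rfl (by
              intro h; rw [h] at hlen; simp at hlen))]
        simp [Function.comp_def]

lemma emb_single (i : ι) : emb ι (Finsupp.single i (1:ℂ)) = X i := by
  simp [emb, Finsupp.linearCombination_single]

lemma P_monomial : ∀ (d : ℕ) (s : ι →₀ ℕ), Finsupp.weight (1 : ι → ℕ) s = d →
    ∀ m : List A, d < m.length → P A ι ρ m (monomial s (1:ℂ)) = 0 := by
  intro d
  induction d with
  | zero =>
    intro s hs m hm
    have hs0 : s = 0 := by
      rw [← Finsupp.degree_eq_zero_iff]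
      rw [Finsupp.degree_eq_weight_one]
      exact hs
    subst hs0
    rw [show monomial (0 : ι →₀ ℕ) (1:ℂ) = (1 : MvPolynomial ι ℂ) by
      simp [monomial_zero']]
    exact P_one A ι ρ m (by intro h; rw [h] at hm; simp at hm)
  | succ d ihd =>
    intro s hs m hm
    have hsne : s ≠ 0 := by
      intro h; rw [h] at hs; simp at hs
    obtain ⟨i, hi⟩ : ∃ i, s i ≠ 0 := by
      by_contra h
      push_neg at h
      exact hsne (Finsupp.ext fun j => h j)
    set s' : ι →₀ ℕ := s - Finsupp.single i 1 with hs'def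
    have hsplit : s = Finsupp.single i 1 + s' := by
      ext j
      by_cases hj : j = i
      · subst hj
        simp [hs'def, Finsupp.single_apply]
        omega
      · simp [hs'def, Finsupp.single_apply, Ne.symm hj, hj]
    have hws' : Finsupp.weight (1 : ι → ℕ) s' = d := by
      have := hs
      rw [hsplit, map_add] at this
      have h1 : Finsupp.weight (1 : ι → ℕ) (Finsupp.single i 1) = 1 := by
        simp [Finsupp.weight_apply, Finsupp.sum_single_index]
      omega
    have hmon : (monomial s (1:ℂ) : MvPolynomial ι ℂ)
        = emb ι (Finsupp.single i (1:ℂ)) * monomial s' (1:ℂ) := by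
      rw [emb_single, hsplit, X, monomial_mul, one_mul]
    rw [hmon, P_mul]
    rw [ihd s' hws' m (by omega), mul_zero]
    rw [show ((holes m).map (fun p => emb ι (ρ p.1 (Finsupp.single i (1:ℂ)))
          * P A ι ρ p.2 (monomial s' (1:ℂ))))
        = (holes m).map (fun _ => (0 : MvPolynomial ι ℂ)) from
      List.map_congr_left (fun p hp => by
        have hlen := length_of_mem_holes hp
        rw [ihd s' hws' p.2 (by omega), mul_zero])]
    simp

lemma P_vanish (d : ℕ) (f : MvPolynomial ι ℂ)
    (hf : f ∈ MvPolynomial.homogeneousSubmodule ι ℂ d) (m : List A) (hm : d < m.length) :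
    P A ι ρ m f = 0 := by
  rw [mem_homogeneousSubmodule] at hf
  have hf' : f.IsHomogeneous d := hf
  conv_lhs => rw [← f.support_sum_monomial_coeff]
  rw [map_sum]
  apply Finset.sum_eq_zero
  intro s hsupp
  have hcoef : coeff s f ≠ 0 := mem_support_iff.mp hsupp
  have hw : Finsupp.weight (1 : ι → ℕ) s = d := hf' hcoef
  have : (monomial s (coeff s f) : MvPolynomial ι ℂ) = coeff s f • monomial s (1:ℂ) := by
    rw [smul_monomial, smul_eq_mul, mul_one]
  rw [this, map_smul, P_monomial A ι ρ d s hw m hm, smul_zero]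

lemma compDer_cons (a : A) (l : List A) (f : MvPolynomial ι ℂ) :
    compDer A ι ρ (a :: l) f = Der A ι ρ a (compDer A ι ρ l f) := by
  simp only [compDer, List.map_cons, List.prod_cons]
  rfl

lemma Der_P_apply (a : A) (m : List A) (f : MvPolynomial ι ℂ) :
    Der A ι ρ a (P A ι ρ m f) = P A ι ρ (a :: m) f
      + ((oneHoles (fun x => a*x) m).map (fun m' => P A ι ρ m' f)).sum := by
  rw [P_cons_apply]; abel

lemma lemA (f : MvPolynomial ι ℂ) (l : List A) :
    compDer A ι ρ l f ∈ Submodule.span ℂ {g | ∃ m : List A, g = P A ι ρ m f} := by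
  induction l with
  | nil => exact Submodule.subset_span ⟨[], by simp [compDer]⟩
  | cons a l ihl =>
    rw [compDer_cons]
    have key : ∀ x ∈ Submodule.span ℂ {g | ∃ m : List A, g = P A ι ρ m f},
        Der A ι ρ a x ∈ Submodule.span ℂ {g | ∃ m : List A, g = P A ι ρ m f} := by
      intro x hx
      induction hx using Submodule.span_induction with
      | mem x hx =>
        obtain ⟨m, rfl⟩ := hx
        rw [Der_P_apply]
        refine add_mem (Submodule.subset_span ⟨a :: m, rfl⟩) ?_
        refine list_sum_mem ?_
        intro x hx
        obtain ⟨m', _, rfl⟩ := List.mem_map.mp hx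
        exact Submodule.subset_span ⟨m', rfl⟩
      | zero => simp
      | add x y _ _ hx hy => rw [map_add]; exact add_mem hx hy
      | smul c x _ hx => rw [Derivation.map_smul]; exact Submodule.smul_mem _ _ hx
    exact key _ ihl

lemma lemB (f : MvPolynomial ι ℂ) : ∀ m : List A,
    P A ι ρ m f ∈ Submodule.span ℂ
      {g | ∃ l : List A, l.length ≤ m.length ∧ g = compDer A ι ρ l f} := by
  have mono : ∀ {n n' : ℕ}, n ≤ n' →
      Submodule.span ℂ {g | ∃ l : List A, l.length ≤ n ∧ g = compDer A ι ρ l f}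
        ≤ Submodule.span ℂ {g | ∃ l : List A, l.length ≤ n' ∧ g = compDer A ι ρ l f} :=
    fun h => Submodule.span_mono (by rintro g ⟨l, hl, hg⟩; exact ⟨l, le_trans hl h, hg⟩)
  suffices H : ∀ n (m : List A), m.length = n →
      P A ι ρ m f ∈ Submodule.span ℂ
        {g | ∃ l : List A, l.length ≤ n ∧ g = compDer A ι ρ l f} by
    intro m; exact H m.length m rfl
  intro n
  induction n using Nat.strong_induction_on with
  | _ n ih =>
    intro m hm
    match m with
    | [] => exact Submodule.subset_span ⟨[], by simp [hm], by simp [compDer]⟩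
    | a :: l =>
      subst hm
      rw [P_cons_apply]
      refine sub_mem ?_ ?_
      · have h1 := ih l.length (by simp) l rfl
        have key : ∀ x ∈ Submodule.span ℂ
            {g | ∃ l' : List A, l'.length ≤ l.length ∧ g = compDer A ι ρ l' f},
            Der A ι ρ a x ∈ Submodule.span ℂ
              {g | ∃ l' : List A, l'.length ≤ (a :: l).length ∧ g = compDer A ι ρ l' f} := by
          intro x hx
          induction hx using Submodule.span_induction with
          | mem x hx =>
            obtain ⟨l', hl', rfl⟩ := hx
            rw [← compDer_cons]
            exact Submodule.subset_span ⟨a :: l', by simpa using hl', rfl⟩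
          | zero => simp
          | add x y _ _ hx hy => rw [map_add]; exact add_mem hx hy
          | smul c x _ hx => rw [Derivation.map_smul]; exact Submodule.smul_mem _ _ hx
        exact key _ h1
      · refine list_sum_mem ?_
        intro x hx
        obtain ⟨m', hm', rfl⟩ := List.mem_map.mp hx
        have hlen := length_of_mem_oneHoles hm'
        refine mono (by simp [hlen]) (ih m'.length (by rw [hlen]; simp) m' rfl)

theorem cyclic_module_spanned_in_degree_at_most_d (d : ℕ)
    (f : MvPolynomial ι ℂ) (hf : f ∈ MvPolynomial.homogeneousSubmodule ι ℂ d) :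
    Submodule.span ℂ {g : MvPolynomial ι ℂ | ∃ l : List A, g = compDer A ι ρ l f} =
      Submodule.span ℂ
        {g : MvPolynomial ι ℂ | ∃ l : List A, l.length ≤ d ∧ g = compDer A ι ρ l f} := by
  apply le_antisymm
  · rw [Submodule.span_le]
    rintro g ⟨l, rfl⟩
    have hA := lemA A ι ρ f l
    have hspan : Submodule.span ℂ {g : MvPolynomial ι ℂ | ∃ m : List A, g = P A ι ρ m f}
        ≤ Submodule.span ℂ
          {g : MvPolynomial ι ℂ | ∃ l : List A, l.length ≤ d ∧ g = compDer A ι ρ l f} := by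
      rw [Submodule.span_le]
      rintro g ⟨m, rfl⟩
      rcases le_or_gt m.length d with h | h
      · refine Submodule.span_mono ?_ (lemB A ι ρ f m)
        rintro g ⟨l', hl', hg⟩
        exact ⟨l', le_trans hl' h, hg⟩
      · rw [P_vanish A ι ρ d f hf m h]
        exact Submodule.zero_mem _
    exact hspan hA
  · rw [Submodule.span_le]
    rintro g ⟨l, _, rfl⟩
    exact Submodule.subset_span ⟨l, rfl⟩


end
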